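/- Let G be a vertex-minimal toroidal graph with no proper odd colouring using at most 9 colours, and suppose v is a vertex of G of degree 5. Then v has at most one neighbour of odd degree. -/

import Mathlib

open scoped Classical
open Finset

/-- The colouring `c` is *odd at* `v`: some colour appears an odd number of
times in the neighbourhood of `v`. -/
def SimpleGraph.IsOddAt {V α : Type} [Fintype V] (G : SimpleGraph V)
    (c : V → α) (v : V) : Prop :=
  ∃ a : α, Odd ((G.neighborFinset v).filter fun w => c w = a).card

/-- `c` is a proper odd vertex-colouring of `G`. -/
def SimpleGraph.IsProperOdd {V α : Type} [Fintype V] (G : SimpleGraph V)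
    (c : V → α) : Prop :=
  (∀ u w : V, G.Adj u w → c u ≠ c w) ∧
  ∀ v : V, 0 < G.degree v → G.IsOddAt c v

/-- `G` has a proper odd colouring with at most 9 colours. -/
def SimpleGraph.HasNice {V : Type} [Fintype V] (G : SimpleGraph V) : Prop :=
  ∃ c : V → Fin 9, G.IsProperOdd c

lemma exists_odd_fiber' {V : Type} [Fintype V] (G : SimpleGraph V)
    (c : V → Fin 9) (u : V) (h : Odd (G.degree u)) :
    G.IsOddAt c u := by
  classical
  by_contra hcon
  rw [SimpleGraph.IsOddAt] at hcon
  push_neg at hcon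
  have hdeg : G.degree u = ∑ a : Fin 9, ((G.neighborFinset u).filter fun w => c w = a).card :=
    Finset.card_eq_sum_card_fiberwise (fun x _ => Finset.mem_univ (c x))
  rw [← Nat.not_even_iff_odd] at h
  refine h (hdeg ▸ Finset.even_sum _ fun a _ => Nat.not_odd_iff_even.mp ?_)
  convert hcon a using 3
  ext x
  simp

/-- In a vertex-minimal toroidal graph with no nice colouring, every vertex of
degree 5 has at most one neighbour of odd degree. -/
theorem min_counterexample_five_vertex_odd_neighbours
    (Toroidal : ∀ (W : Type) [Fintype W] [DecidableEq W], SimpleGraph W → Prop)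
    {V : Type} [Fintype V] [DecidableEq V] (G : SimpleGraph V)
    (hG : Toroidal V G)
    (hdel : ∀ v : V, Toroidal {x : V // x ≠ v} (G.induce {x : V | x ≠ v}))
    (hno : ¬ G.HasNice)
    (hmin : ∀ (W : Type) [Fintype W] [DecidableEq W] (H : SimpleGraph W),
      Toroidal W H → Fintype.card W < Fintype.card V → H.HasNice)
    (v : V) (hv : G.degree v = 5) :
    ((G.neighborFinset v).filter fun w => Odd (G.degree w)).card ≤ 1 := by
  classical
  by_contra hcon
  push_neg at hcon
  apply hno
  set H := G.induce {x : V | x ≠ v} with hH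
  have hcard : Fintype.card {x : V // x ≠ v} < Fintype.card V := by
    simpa using Fintype.card_subtype_lt (p := fun x => x ≠ v) (x := v) (by simp)
  obtain ⟨c, hcp, hco⟩ := hmin _ H (hdel v) hcard
  set g : V → Fin 9 := fun x => if h : x ≠ v then c ⟨x, h⟩ else 0 with hg
  have hgx : ∀ (x : V) (h : x ≠ v), g x = c ⟨x, h⟩ := by
    intro x h; simp [hg, h]
  -- the neighbourhood of `w` in `H`, pushed to `V`
  have himg : ∀ (w : V) (hw : w ≠ v),
      ((H.neighborFinset ⟨w, hw⟩).image Subtype.val) = (G.neighborFinset w).erase v := by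
    intro w hw
    ext x
    simp only [Finset.mem_image, SimpleGraph.mem_neighborFinset, Finset.mem_erase,
      Subtype.exists]
    constructor
    · rintro ⟨a, ha, hadj, rfl⟩
      exact ⟨ha, by simpa [hH] using hadj⟩
    · rintro ⟨hx, hadj⟩
      exact ⟨x, hx, by simpa [hH] using hadj, rfl⟩
  have hdegH : ∀ (w : V) (hw : w ≠ v),
      H.degree ⟨w, hw⟩ = ((G.neighborFinset w).erase v).card := by
    intro w hw
    rw [← SimpleGraph.card_neighborFinset_eq_degree, ← himg w hw,
      Finset.card_image_of_injective _ Subtype.val_injective]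
  have hcount : ∀ (w : V) (hw : w ≠ v) (a : Fin 9),
      ((H.neighborFinset ⟨w, hw⟩).filter fun x => c x = a).card
      = (((G.neighborFinset w).erase v).filter fun x => g x = a).card := by
    intro w hw a
    rw [← himg w hw]
    classical
    rw [Finset.filter_image, Finset.card_image_of_injective _ Subtype.val_injective]
    congr 1
    apply Finset.filter_congr
    intro x hx
    simp [hgx x.val x.property]
  -- the set of even-degree neighbours of v
  set Evens : Finset V := (G.neighborFinset v).filter (fun w => ¬ Odd (G.degree w)) with hE
  have hNcard : (G.neighborFinset v).card = 5 := by
    rw [SimpleGraph.card_neighborFinset_eq_degree, hv]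
  have hEcard : Evens.card ≤ 3 := by
    rw [hE]
    have := Finset.card_filter_add_card_filter_not
      (s := G.neighborFinset v) (p := fun w => Odd (G.degree w))
    rw [hNcard] at this
    omega
  -- for each even neighbour, a colour appearing oddly in its punctured neighbourhood
  set f : V → Fin 9 := fun w =>
    if h : ∃ a : Fin 9, Odd ((((G.neighborFinset w).erase v).filter fun x => g x = a).card)
    then h.choose else 0 with hfdef
  have hf : ∀ w ∈ Evens, Odd ((((G.neighborFinset w).erase v).filter fun x => g x = f w).card) := by
    intro w hwE
    rw [hE, Finset.mem_filter] at hwE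
    obtain ⟨hwN, hwodd⟩ := hwE
    have hadj : G.Adj v w := (SimpleGraph.mem_neighborFinset _ _ _).mp hwN
    have hw : w ≠ v := hadj.ne'
    have hvmem : v ∈ G.neighborFinset w := (SimpleGraph.mem_neighborFinset _ _ _).mpr hadj.symm
    have hdge : 2 ≤ G.degree w := by
      have h1 : 1 ≤ G.degree w := by
        rw [← SimpleGraph.card_neighborFinset_eq_degree]
        exact Finset.card_pos.mpr ⟨v, hvmem⟩
      rcases Nat.even_or_odd (G.degree w) with he | ho
      · obtain ⟨k, hk⟩ := he; omega
      · exact absurd ho hwodd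
    have hpos : 0 < H.degree ⟨w, hw⟩ := by
      rw [hdegH w hw, Finset.card_erase_of_mem hvmem, SimpleGraph.card_neighborFinset_eq_degree]
      omega
    obtain ⟨a, ha⟩ := hco ⟨w, hw⟩ hpos
    have hex : ∃ a : Fin 9, Odd ((((G.neighborFinset w).erase v).filter fun x => g x = a).card) := by
      refine ⟨a, ?_⟩
      rw [← hcount w hw a]
      convert ha using 3 <;> ext <;> simp
    have hfw : f w = hex.choose := by simp only [hfdef]; exact dif_pos hex
    rw [hfw]
    exact hex.choose_spec
  -- choose a free colour
  set F : Finset (Fin 9) := ((G.neighborFinset v).image g) ∪ (Evens.image f) with hF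
  have hFcard : F.card ≤ 8 := by
    calc F.card ≤ ((G.neighborFinset v).image g).card + (Evens.image f).card :=
          Finset.card_union_le _ _
      _ ≤ (G.neighborFinset v).card + Evens.card :=
          Nat.add_le_add (Finset.card_image_le) (Finset.card_image_le)
      _ ≤ 8 := by rw [hNcard]; omega
  obtain ⟨b, hb⟩ : ∃ b : Fin 9, b ∉ F := by
    by_contra hbb
    push_neg at hbb
    have h9 : (Finset.univ : Finset (Fin 9)).card ≤ F.card :=
      Finset.card_le_card (fun x _ => hbb x)
    simp at h9
    omega
  -- the extended colouring
  set d : V → Fin 9 := fun x => if x = v then b else g x with hd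
  have hdv : d v = b := by simp [hd]
  have hdne : ∀ x : V, x ≠ v → d x = g x := by intro x hx; simp [hd, hx]
  refine ⟨d, ?_, ?_⟩
  · -- properness
    intro u w hadj
    by_cases hu : u = v
    · have hadj' : G.Adj v w := hu ▸ hadj
      have hwv : w ≠ v := hadj'.ne'
      rw [hu, hdv, hdne w hwv]
      intro hbg
      exact hb (Finset.mem_union_left _ (hbg ▸ Finset.mem_image_of_mem g
        ((SimpleGraph.mem_neighborFinset _ _ _).mpr hadj')))
    · by_cases hwv : w = v
      · have hadj' : G.Adj v u := (hwv ▸ hadj).symm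
        rw [hwv, hdv, hdne u hu]
        intro hgb
        exact hb (Finset.mem_union_left _ (hgb.symm ▸ Finset.mem_image_of_mem g
          ((SimpleGraph.mem_neighborFinset _ _ _).mpr hadj')))
      · rw [hdne u hu, hdne w hwv, hgx u hu, hgx w hwv]
        exact hcp ⟨u, hu⟩ ⟨w, hwv⟩ (by simpa [hH] using hadj)
  · -- oddness
    intro u hposu
    by_cases hodd : Odd (G.degree u)
    · exact exists_odd_fiber' G d u hodd
    · have hu : u ≠ v := by
        intro h; rw [h, hv] at hodd; exact hodd (by decide)
      by_cases hmem : u ∈ G.neighborFinset v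
      · -- even-degree neighbour of v
        have huE : u ∈ Evens := by rw [hE, Finset.mem_filter]; exact ⟨hmem, hodd⟩
        have hfu := hf u huE
        have hbf : b ≠ f u := by
          intro h
          exact hb (Finset.mem_union_right _ (h ▸ Finset.mem_image_of_mem f huE))
        refine ⟨f u, ?_⟩
        have hkey : ((G.neighborFinset u).filter fun x => d x = f u)
            = (((G.neighborFinset u).erase v).filter fun x => g x = f u) := by
          ext x
          simp only [Finset.mem_filter, Finset.mem_erase]
          constructor
          · rintro ⟨hx, hdx⟩
            have hxv : x ≠ v := by
              rintro rfl
              rw [hdv] at hdx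
              exact hbf hdx
            exact ⟨⟨hxv, hx⟩, by rwa [hdne x hxv] at hdx⟩
          · rintro ⟨⟨hxv, hx⟩, hgx'⟩
            exact ⟨hx, by rwa [hdne x hxv]⟩
        have hfin : Odd ((G.neighborFinset u).filter fun x => d x = f u).card := by
          rw [hkey]; exact hfu
        convert hfin using 3
      · -- non-neighbour of v
        have hvnot : v ∉ G.neighborFinset u := by
          intro h
          exact hmem ((SimpleGraph.mem_neighborFinset _ _ _).mpr
            ((SimpleGraph.mem_neighborFinset _ _ _).mp h).symm)
        have herase : (G.neighborFinset u).erase v = G.neighborFinset u :=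
          Finset.erase_eq_of_notMem hvnot
        have hpos : 0 < H.degree ⟨u, hu⟩ := by
          rw [hdegH u hu, herase, SimpleGraph.card_neighborFinset_eq_degree]
          exact hposu
        obtain ⟨a, ha⟩ := hco ⟨u, hu⟩ hpos
        refine ⟨a, ?_⟩
        have h1 := hcount u hu a
        rw [herase] at h1
        have h2 : ((G.neighborFinset u).filter fun x => g x = a)
            = ((G.neighborFinset u).filter fun x => d x = a) := by
          apply Finset.filter_congr
          intro x hx
          have hxv : x ≠ v := by rintro rfl; exact hvnot hx
          rw [hdne x hxv]
        have h3 : Odd ((G.neighborFinset u).filter fun x => d x = a).card := by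
          rw [← h2, ← h1]
          convert ha using 3 <;> ext <;> simp
        convert h3 using 3
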